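/- arXiv:1801.02071 — 3 statements merged into one kernel-verified Lean document; each statement's English description precedes it below -/
import Mathlib

section
/- Let L = V ⊕ W be a color gLt-algebra with quasi-multiplicative basis {e_i}_{i∈I} of W ≠ 0. If j ∈ [i] and 0 ≠ ⟨e_j, e_{i₂}, …, e_{iₙ}⟩_σ ∈ V for some i₂,…,iₙ ∈ I and σ ∈ Sₙ, then i₂,…,iₙ ∈ [i]; consequently ⟨e_j, e_{i₂},…,e_{iₙ}⟩_σ ∈ V_{[i]} and ⟨W_{[i]}, (⊕_{r∈I}𝔽e_r), …, (⊕_{s∈I}𝔽e_s)⟩_σ ⊆ 𝔍_{[i]} for all σ. -/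
set_option maxHeartbeats 1000000

/-- A (color) generalized Lie-type algebra: an `(n+2)`-ary `G`-graded algebra with
bicharacter `epsilon` satisfying the (colored) generalized Lie-type identities with
structure constants `alpha` (allowed to depend on the degrees of the arguments). -/
structure ColorGLT (F : Type) [Field F] (G : Type) [AddCommGroup G] [DecidableEq G]
    (L : Type) [AddCommGroup L] [Module F L] (n : ℕ) where
  bracket : MultilinearMap F (fun _ : Fin (n + 2) => L) L
  grading : G → Submodule F L
  isInternal : DirectSum.IsInternal grading
  bracket_graded : ∀ (g : Fin (n + 2) → G) (x : Fin (n + 2) → L),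
    (∀ t, x t ∈ grading (g t)) → bracket x ∈ grading (∑ t, g t)
  epsilon : G → G → F
  epsilon_ne_zero : ∀ g h, epsilon g h ≠ 0
  epsilon_add_left : ∀ g h k, epsilon (g + h) k = epsilon g k * epsilon h k
  epsilon_add_right : ∀ g h k, epsilon k (g + h) = epsilon k g * epsilon k h
  epsilon_skew : ∀ g h, epsilon g h * epsilon h g = 1
  alpha : Fin (n + 2) → Fin (n + 2) → Fin (n + 2) → Equiv.Perm (Fin (n + 2)) →
      Equiv.Perm (Fin (n + 1)) → (Fin (n + 2) → G) → (Fin (n + 1) → G) → F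
  glt : ∀ (k : Fin (n + 2)) (gx : Fin (n + 2) → G) (gy : Fin (n + 1) → G)
      (x : Fin (n + 2) → L) (y : Fin (n + 1) → L),
      (∀ t, x t ∈ grading (gx t)) → (∀ t, y t ∈ grading (gy t)) →
      bracket (Fin.insertNth k (bracket x) y) =
        ∑ i : Fin (n + 2), ∑ j : Fin (n + 2), ∑ σ₁ : Equiv.Perm (Fin (n + 2)),
          ∑ σ₂ : Equiv.Perm (Fin (n + 1)),
            alpha i j k σ₁ σ₂ gx gy •
              bracket (Function.update (fun t => x (σ₁ t)) i
                (bracket (Fin.insertNth j (x (σ₁ i)) (fun t => y (σ₂ t)))))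

namespace ColorGLT

variable {F : Type} [Field F] {G : Type} [AddCommGroup G] [DecidableEq G]
    {L : Type} [AddCommGroup L] [Module F L] {n : ℕ}

/-- A color gLt-ideal: a graded subspace `S` with `⟨S, L, …, L⟩_σ ⊆ S` for all `σ ∈ Sₙ`. -/
def IsIdeal (A : ColorGLT F G L n) (S : Submodule F L) : Prop :=
  (S = ⨆ g : G, S ⊓ A.grading g) ∧
  ∀ (σ : Equiv.Perm (Fin (n + 2))) (x : Fin (n + 2) → L),
    x 0 ∈ S → A.bracket (fun t => x (σ t)) ∈ S

/-- `L` is centerless: `Z(L) = {x : ⟨x, L, …, L⟩_σ = 0 ∀ σ} = 0`. -/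
def Centerless (A : ColorGLT F G L n) : Prop :=
  ∀ x : L, (∀ (σ : Equiv.Perm (Fin (n + 2))) (y : Fin (n + 2) → L),
    y 0 = x → A.bracket (fun t => y (σ t)) = 0) → x = 0

end ColorGLT

/-- A quasi-multiplicative basis of a color gLt-algebra: `L = V ⊕ W`, with a homogeneous
basis `{e i}` of `W ≠ 0` satisfying the three quasi-multiplicativity conditions. -/
structure QMBasis {F : Type} [Field F] {G : Type} [AddCommGroup G] [DecidableEq G]
    {L : Type} [AddCommGroup L] [Module F L] {n : ℕ}
    (A : ColorGLT F G L n) (I : Type) where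
  V : Submodule F L
  W : Submodule F L
  compl : IsCompl V W
  W_ne_bot : W ≠ ⊥
  V_graded : V = ⨆ g : G, V ⊓ A.grading g
  W_graded : W = ⨆ g : G, W ⊓ A.grading g
  e : I → L
  deg : I → G
  e_homog : ∀ i, e i ∈ A.grading (deg i)
  e_indep : LinearIndependent F e
  e_span : Submodule.span F (Set.range e) = W
  qm1 : ∀ c : Fin (n + 2) → I,
    (∃ j, A.bracket (fun t => e (c t)) ∈ Submodule.span F {e j}) ∨
      A.bracket (fun t => e (c t)) ∈ V
  qm2 : ∀ (σ : Equiv.Perm (Fin (n + 2))) (S : Finset (Fin (n + 2))),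
    S.Nonempty → S ≠ Finset.univ → ∀ ind : Fin (n + 2) → I, ∃ j : I,
      ∀ x : Fin (n + 2) → L, (∀ t, t ∈ S → x t = e (ind t)) →
        (∀ t, t ∉ S → x t ∈ V) →
        A.bracket (fun t => x (σ t)) ∈ Submodule.span F {e j}
  qm3 : (∃ j, ∀ x : Fin (n + 2) → L, (∀ t, x t ∈ V) →
          A.bracket x ∈ Submodule.span F {e j}) ∨
        (∀ x : Fin (n + 2) → L, (∀ t, x t ∈ V) → A.bracket x ∈ V)

namespace QMBasis

variable {F : Type} [Field F] {G : Type} [AddCommGroup G] [DecidableEq G]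
    {L : Type} [AddCommGroup L] [Module F L] {n : ℕ} {I : Type}
    {A : ColorGLT F G L n}

/-- The set of elements represented by an index of `𝔉 = I ∪ {v}`: `e i` for `some i`,
the subspace `V` for `none` (= `v`). -/
def elemSet (B : QMBasis A I) : Option I → Set L
  | none => (B.V : Set L)
  | some i => {B.e i}

/-- The target set of an index of `𝔉`: the line `𝔽 e j` for `some j`, `V` for `v`. -/
def targetSet (B : QMBasis A I) : Option I → Set L
  | none => (B.V : Set L)
  | some j => (Submodule.span F {B.e j} : Set L)

/-- `x ∈ a_σ(c)`: the `σ`-permuted product of the elements represented by `c` is nonzero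
and lands in the target represented by `x`; the value `v` is only allowed for all-basis
or all-`V` tuples. -/
def aMem (B : QMBasis A I) (σ : Equiv.Perm (Fin (n + 2)))
    (c : Fin (n + 2) → Option I) (x : Option I) : Prop :=
  (∃ z : Fin (n + 2) → L, (∀ t, z t ∈ B.elemSet (c (σ t))) ∧ A.bracket z ≠ 0) ∧
  (∀ z : Fin (n + 2) → L, (∀ t, z t ∈ B.elemSet (c (σ t))) → A.bracket z ∈ B.targetSet x) ∧
  (x = none → ((∀ t, (c t).isSome = true) ∨ (∀ t, c t = none)))

/-- An admissible `(n+1)`-tuple over `𝔉 ∪ 𝔉̄`: all entries barred (`true`) or all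
unbarred (`false`). -/
abbrev Tup (I : Type) (n : ℕ) := Bool × (Fin (n + 1) → Option I)

/-- `x ∈ μ(j, X)` where `j ∈ 𝔉 ∪ 𝔉̄` (left = unbarred, right = barred) and `X` is an
admissible tuple; defined via `a_σ` and `b_σ` as in the paper. -/
def muMem (B : QMBasis A I) :
    Option I ⊕ Option I → Tup I n → Option I → Prop
  | Sum.inl j, (false, c), x => ∃ σ : Equiv.Perm (Fin (n + 2)), B.aMem σ (Fin.cons j c) x
  | Sum.inl j, (true, c), x => ∃ σ : Equiv.Perm (Fin (n + 2)), B.aMem σ (Fin.cons x c) j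
  | Sum.inr j, (false, c), x =>
      ∃ (k : Fin (n + 1)) (σ : Equiv.Perm (Fin (n + 2))),
        B.aMem σ (Fin.cons x (Fin.cons j (fun t => c (k.succAbove t)))) (c k)
  | Sum.inr _, (true, _), _ => False

/-- The map `φ : P(I ∪ Ī) × T → P(I ∪ Ī)`, `φ(J, X) = K ∪ K̄` with
`K = (⋃_{j ∈ J} μ(j, X)) \ {v}` (left = `I`, right = `Ī`). -/
def phi (B : QMBasis A I) (J : Set (I ⊕ I)) (X : Tup I n) : Set (I ⊕ I) :=
  {p | ∃ i : I, (p = Sum.inl i ∨ p = Sum.inr i) ∧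
    ∃ j ∈ J, B.muMem (Sum.map some some j) X (some i)}

/-- Iterated application of `φ` along a list of tuples. -/
def chain (B : QMBasis A I) : Set (I ⊕ I) → List (Tup I n) → Set (I ⊕ I)
  | s, [] => s
  | s, X :: r => chain B (B.phi s X) r

/-- The connection relation: `i` is connected to `j`. -/
def Connected (B : QMBasis A I) (i j : I) : Prop :=
  i = j ∨ ∃ (Xs : List (Tup I n)) (st : I ⊕ I),
    Xs ≠ [] ∧ (st = Sum.inl i ∨ st = Sum.inr i) ∧
    (∀ m, m < Xs.length → (chain B {st} (List.take m Xs)).Nonempty) ∧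
    Sum.inl j ∈ chain B {st} Xs

/-- The connection class `[i]` of `i`. -/
def cls (B : QMBasis A I) (i : I) : Set I := {j | B.Connected i j}

/-- `W_{[i]} = ⊕_{j ∈ [i]} 𝔽 e_j`. -/
def Wcls (B : QMBasis A I) (i : I) : Submodule F L :=
  Submodule.span F (B.e '' B.cls i)

/-- `V_{[i]} = (Σ_{i₁,…,iₙ ∈ [i]} 𝔽⟨e_{i₁},…,e_{iₙ}⟩) ∩ V`. -/
def Vcls (B : QMBasis A I) (i : I) : Submodule F L :=
  Submodule.span F {z : L | ∃ c : Fin (n + 2) → I,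
    (∀ t, c t ∈ B.cls i) ∧ z = A.bracket (fun t => B.e (c t))} ⊓ B.V

/-- `𝔍_{[i]} = V_{[i]} ⊕ W_{[i]}`. -/
def Jcls (B : QMBasis A I) (i : I) : Submodule F L := B.Vcls i ⊔ B.Wcls i

/-- `S` admits a quasi-multiplicative basis inherited from that of `L`:
`S = V_S ⊕ W_S` with `V_S ⊆ V` and `W_S ≠ 0` spanned by a subset of the `e i`. -/
def HasInheritedBasis (B : QMBasis A I) (S : Submodule F L) : Prop :=
  ∃ (V' : Submodule F L) (J' : Set I), V' ≤ B.V ∧ J'.Nonempty ∧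
    S = V' ⊔ Submodule.span F (B.e '' J')

/-- `V` is tight: `V = 0` or `V = Σ_{μ(i₁,…,iₙ) = {v}} 𝔽⟨e_{i₁},…,e_{iₙ}⟩`. -/
def Tight (B : QMBasis A I) : Prop :=
  B.V = ⊥ ∨
    B.V = Submodule.span F {z : L | ∃ c : Fin (n + 2) → I,
      ({x : Option I | ∃ σ, B.aMem σ (fun t => some (c t)) x} = {none}) ∧
      z = A.bracket (fun t => B.e (c t))}

/-- The set of elements represented by `u_{k}`: `u_k = e_k + e_{k̄}` (`= e` of the
underlying index, since `e_{j̄} = 0`) if `k ∉ {v, v̄}`, and `u_k = V` otherwise. -/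
def uSet (B : QMBasis A I) : Option I ⊕ Option I → Set L
  | Sum.inl none => (B.V : Set L)
  | Sum.inr none => (B.V : Set L)
  | Sum.inl (some i) => {B.e i}
  | Sum.inr (some i) => {B.e i}

/-- The full `(n+2)`-tuple `(k₁, …, kₙ)` over `𝔉 ∪ 𝔉̄` obtained from a first entry and
an admissible tuple. -/
def fullTup {I : Type} {n : ℕ} (k₁ : Option I ⊕ Option I) (X : Tup I n) :
    Fin (n + 2) → Option I ⊕ Option I :=
  Fin.cons k₁ (fun t => if X.1 then Sum.inr (X.2 t) else Sum.inl (X.2 t))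

/-- The basis is `μ`-quasi-multiplicative: whenever `i ∈ μ(k₁, …, kₙ)` then
`e i ∈ 𝔽⟨u_{k₁}, …, u_{kₙ}⟩_σ` for some `σ ∈ Sₙ`. -/
def MuQM (B : QMBasis A I) : Prop :=
  ∀ (k₁ : Option I ⊕ Option I) (X : Tup I n) (i : I),
    B.muMem k₁ X (some i) →
    ∃ (σ : Equiv.Perm (Fin (n + 2))) (z : Fin (n + 2) → L),
      (∀ t, z t ∈ B.uSet (fullTup k₁ X (σ t))) ∧
      B.e i ∈ Submodule.span F {A.bracket z}

end QMBasis

namespace QMBasis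

variable {F : Type} [Field F] {G : Type} [AddCommGroup G] [DecidableEq G]
    {L : Type} [AddCommGroup L] [Module F L] {n : ℕ} {I : Type}
    {A : ColorGLT F G L n}

lemma mem_phi_inl (B : QMBasis A I) (S : Set (I ⊕ I)) (X : Tup I n) (m : I) :
    Sum.inl m ∈ B.phi S X ↔ ∃ j ∈ S, B.muMem (Sum.map some some j) X (some m) := by
  constructor
  · rintro ⟨i', hi' | hi', h⟩
    · cases Sum.inl.inj hi'; exact h
    · exact absurd hi' (by simp)
  · intro h
    exact ⟨m, Or.inl rfl, h⟩

lemma mem_phi_inr (B : QMBasis A I) (S : Set (I ⊕ I)) (X : Tup I n) (m : I) :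
    Sum.inr m ∈ B.phi S X ↔ ∃ j ∈ S, B.muMem (Sum.map some some j) X (some m) := by
  constructor
  · rintro ⟨i', hi' | hi', h⟩
    · exact absurd hi' (by simp)
    · cases Sum.inr.inj hi'; exact h
  · intro h
    exact ⟨m, Or.inr rfl, h⟩

lemma chain_concat (B : QMBasis A I) (s : Set (I ⊕ I)) (Xs : List (Tup I n)) (X : Tup I n) :
    B.chain s (Xs ++ [X]) = B.phi (B.chain s Xs) X := by
  induction Xs generalizing s with
  | nil => rfl
  | cons Y r ih =>
    show B.chain (B.phi s Y) (r ++ [X]) = _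
    rw [ih]
    rfl

lemma chain_inr_of_inl (B : QMBasis A I) (s : Set (I ⊕ I)) (Xs : List (Tup I n))
    (h : Xs ≠ []) (m : I) (hm : Sum.inl m ∈ B.chain s Xs) :
    Sum.inr m ∈ B.chain s Xs := by
  induction Xs generalizing s with
  | nil => exact absurd rfl h
  | cons Y r ih =>
    cases r with
    | nil =>
      exact (B.mem_phi_inr s Y m).mpr ((B.mem_phi_inl s Y m).mp hm)
    | cons Z r' =>
      exact ih (B.phi s Y) (by simp) hm

lemma connect_step (B : QMBasis A I) {i j m : I} (X : Tup I n)
    (hc : B.Connected i j)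
    (h : B.muMem (Sum.inl (some j)) X (some m) ∨ B.muMem (Sum.inr (some j)) X (some m)) :
    B.Connected i m := by
  obtain ⟨p, hp, hmu⟩ : ∃ p : I ⊕ I, (p = Sum.inl j ∨ p = Sum.inr j) ∧
      B.muMem (Sum.map some some p) X (some m) := by
    rcases h with h | h
    · exact ⟨Sum.inl j, Or.inl rfl, h⟩
    · exact ⟨Sum.inr j, Or.inr rfl, h⟩
  rcases hc with rfl | ⟨Xs, st, hne, hst, hpart, hfin⟩
  · right
    refine ⟨[X], p, by simp, ?_, ?_, ?_⟩
    · rcases hp with rfl | rfl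
      · exact Or.inl rfl
      · exact Or.inr rfl
    · intro m' hm'
      have : m' = 0 := Nat.lt_one_iff.mp (by simpa using hm')
      subst this
      exact ⟨p, rfl⟩
    · exact (B.mem_phi_inl {p} X m).mpr ⟨p, rfl, hmu⟩
  · right
    refine ⟨Xs ++ [X], st, by simp, hst, ?_, ?_⟩
    · intro m' hm'
      rw [List.length_append, List.length_singleton] at hm'
      rcases Nat.lt_succ_iff_lt_or_eq.mp hm' with h' | rfl
      · rw [List.take_append_of_le_length h'.le]
        exact hpart m' h'
      · rw [List.take_left]
        exact ⟨Sum.inl j, hfin⟩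
    · rw [B.chain_concat]
      refine (B.mem_phi_inl _ X m).mpr ⟨p, ?_, hmu⟩
      rcases hp with rfl | rfl
      · exact hfin
      · exact B.chain_inr_of_inl _ Xs hne j hfin

lemma key1 (B : QMBasis A I) (d : Fin (n + 2) → I) {s₀ s₁ : Fin (n + 2)}
    (hs : s₀ ≠ s₁)
    (hne : A.bracket (fun t => B.e (d t)) ≠ 0)
    (hV : A.bracket (fun t => B.e (d t)) ∈ B.V) :
    ∃ X : Tup I n, B.muMem (Sum.inr (some (d s₀))) X (some (d s₁)) := by
  classical
  set τ : Equiv.Perm (Fin (n + 2)) := Equiv.swap 0 s₁ with hτ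
  have hτs₀ : τ (τ s₀) = s₀ := Equiv.swap_apply_self 0 s₁ s₀
  have h01 : (0 : Fin (n + 2)) ≠ 1 := Fin.ne_of_val_ne (by simp)
  have hs₀'0 : τ s₀ ≠ 0 := by
    intro h
    apply hs
    have h2 : τ (τ s₀) = τ 0 := by rw [h]
    rw [hτs₀, Equiv.swap_apply_left] at h2
    exact h2
  set ρ : Equiv.Perm (Fin (n + 2)) := Equiv.swap 1 (τ s₀) with hρ
  set π : Equiv.Perm (Fin (n + 2)) := τ * ρ with hπdef
  have hπ0 : π 0 = s₁ := by
    show τ (ρ 0) = s₁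
    rw [hρ, Equiv.swap_apply_of_ne_of_ne h01 (Ne.symm hs₀'0), hτ, Equiv.swap_apply_left]
  have hπ1 : π 1 = s₀ := by
    show τ (ρ 1) = s₀
    rw [hρ, Equiv.swap_apply_left, hτs₀]
  set cc : Fin (n + 1) → Option I :=
    Fin.cons none (fun t : Fin n => some (d (π t.succ.succ))) with hcc
  have hD : ∀ u : Fin (n + 2),
      (Fin.cons (some (d s₁)) (Fin.cons (some (d s₀))
        (fun t => cc ((0 : Fin (n + 1)).succAbove t))) : Fin (n + 2) → Option I) u
        = some (d (π u)) := by
    intro u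
    refine Fin.cases ?_ (fun u' => ?_) u
    · rw [Fin.cons_zero, hπ0]
    · rw [Fin.cons_succ]
      refine Fin.cases ?_ (fun t => ?_) u'
      · rw [Fin.cons_zero, Fin.succ_zero_eq_one, hπ1]
      · rw [Fin.cons_succ, Fin.succAbove_zero, hcc, Fin.cons_succ]
  refine ⟨(false, cc), 0, π⁻¹, ?_, ?_, ?_⟩
  · refine ⟨fun t => B.e (d t), fun t => ?_, hne⟩
    rw [hD, Equiv.Perm.coe_inv, Equiv.apply_symm_apply]
    exact rfl
  · intro z hz
    have hzeq : z = fun t => B.e (d t) := by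
      funext t
      have := hz t
      rw [hD, Equiv.Perm.coe_inv, Equiv.apply_symm_apply] at this
      exact this
    rw [hzeq]
    show _ ∈ B.targetSet (cc 0)
    rw [hcc]
    exact hV
  · intro _
    left
    intro t
    rw [hD]
    rfl

lemma key2 (B : QMBasis A I) (d : Fin (n + 2) → I) (s₀ : Fin (n + 2)) (j : I)
    (hne : A.bracket (fun t => B.e (d t)) ≠ 0)
    (hsp : A.bracket (fun t => B.e (d t)) ∈ Submodule.span F {B.e j}) :
    ∃ X : Tup I n, B.muMem (Sum.inl (some (d s₀))) X (some j) := by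
  classical
  set π : Equiv.Perm (Fin (n + 2)) := Equiv.swap 0 s₀ with hπdef
  have hπ0 : π 0 = s₀ := Equiv.swap_apply_left 0 s₀
  set cc : Fin (n + 1) → Option I := fun r => some (d (π r.succ)) with hcc
  have hD : ∀ u : Fin (n + 2),
      (Fin.cons (some (d s₀)) cc : Fin (n + 2) → Option I) u = some (d (π u)) := by
    intro u
    refine Fin.cases ?_ (fun u' => ?_) u
    · rw [Fin.cons_zero, hπ0]
    · rw [Fin.cons_succ]
  refine ⟨(false, cc), π⁻¹, ?_, ?_, ?_⟩
  · refine ⟨fun t => B.e (d t), fun t => ?_, hne⟩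
    rw [hD, Equiv.Perm.coe_inv, Equiv.apply_symm_apply]
    exact rfl
  · intro z hz
    have hzeq : z = fun t => B.e (d t) := by
      funext t
      have := hz t
      rw [hD, Equiv.Perm.coe_inv, Equiv.apply_symm_apply] at this
      exact this
    rw [hzeq]
    exact hsp
  · intro h
    exact absurd h (by simp)

end QMBasis

theorem stmt15 {F : Type} [Field F] {G : Type} [AddCommGroup G] [DecidableEq G]
    {L : Type} [AddCommGroup L] [Module F L] {n : ℕ} {I : Type}
    {A : ColorGLT F G L n} (B : QMBasis A I) (i : I) :
    (∀ (c : Fin (n + 2) → I) (σ : Equiv.Perm (Fin (n + 2))), c 0 ∈ B.cls i →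
      A.bracket (fun t => B.e (c (σ t))) ≠ 0 →
      A.bracket (fun t => B.e (c (σ t))) ∈ B.V →
      (∀ t, c t ∈ B.cls i) ∧ A.bracket (fun t => B.e (c (σ t))) ∈ B.Vcls i) ∧
    (∀ (c : Fin (n + 2) → I) (σ : Equiv.Perm (Fin (n + 2))), c 0 ∈ B.cls i →
      A.bracket (fun t => B.e (c (σ t))) ∈ B.Jcls i) := by
  classical
  have part1 : ∀ (c : Fin (n + 2) → I) (σ : Equiv.Perm (Fin (n + 2))), c 0 ∈ B.cls i →
      A.bracket (fun t => B.e (c (σ t))) ≠ 0 →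
      A.bracket (fun t => B.e (c (σ t))) ∈ B.V →
      (∀ t, c t ∈ B.cls i) ∧ A.bracket (fun t => B.e (c (σ t))) ∈ B.Vcls i := by
    intro c σ h0 hne hV
    have hall : ∀ t, c t ∈ B.cls i := by
      intro t
      by_cases ht : t = 0
      · rw [ht]; exact h0
      · have hs : σ⁻¹ 0 ≠ σ⁻¹ t := by
          intro h
          apply ht
          have h2 := congrArg σ h
          rw [Equiv.Perm.coe_inv, Equiv.apply_symm_apply, Equiv.apply_symm_apply] at h2
          exact h2.symm
        obtain ⟨X, hmu⟩ := B.key1 (fun t => c (σ t)) hs hne hV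
        have hmu' : B.muMem (Sum.inr (some (c 0))) X (some (c t)) := by simpa using hmu
        exact B.connect_step X h0 (Or.inr hmu')
    refine ⟨hall, Submodule.mem_inf.mpr ⟨?_, hV⟩⟩
    exact Submodule.subset_span ⟨fun t => c (σ t), fun t => hall (σ t), rfl⟩
  refine ⟨part1, ?_⟩
  intro c σ h0
  by_cases hne : A.bracket (fun t => B.e (c (σ t))) = 0
  · rw [hne]; exact zero_mem _
  · rcases B.qm1 (fun t => c (σ t)) with ⟨j, hj⟩ | hV
    · obtain ⟨X, hmu⟩ := B.key2 (fun t => c (σ t)) (σ⁻¹ 0) j hne hj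
      have hmu' : B.muMem (Sum.inl (some (c 0))) X (some j) := by simpa using hmu
      have hjcls : j ∈ B.cls i := B.connect_step X h0 (Or.inl hmu')
      refine Submodule.mem_sup_right ?_
      have hej : B.e j ∈ B.Wcls i := Submodule.subset_span ⟨j, hjcls, rfl⟩
      exact (Submodule.span_singleton_le_iff_mem _ _).mpr hej hj
    · exact Submodule.mem_sup_left ((part1 c σ h0 hne hV).2)
end

section
/- Let L = V ⊕ W be a color gLt-algebra with quasi-multiplicative basis, and let i, h ∈ I with [i] ≠ [h]. Then for any i' ∈ [i], h' ∈ [h], k₃,…,kₙ ∈ I and σ ∈ Sₙ, the product ⟨e_{i'}, e_{h'}, e_{k₃}, …, e_{kₙ}⟩_σ cannot be a nonzero element of V; i.e. if it is nonzero it lies in some 𝔽e_m, and in fact it must be zero. -/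
set_option maxHeartbeats 1000000

namespace QMBasis

variable {F : Type} [Field F] {G : Type} [AddCommGroup G] [DecidableEq G]
    {L : Type} [AddCommGroup L] [Module F L] {n : ℕ} {I : Type}
    {A : ColorGLT F G L n}

/-- One-step relation underlying connections. -/
def RelStep (B : QMBasis A I) (p q : I ⊕ I) : Prop :=
  ∃ X : Tup I n, B.muMem (Sum.map some some p) X (some (Sum.elim id id q))

lemma mem_phi_iff {B : QMBasis A I} {s : Set (I ⊕ I)} {X : Tup I n} {q : I ⊕ I} :
    q ∈ B.phi s X ↔ ∃ p ∈ s, B.muMem (Sum.map some some p) X (some (Sum.elim id id q)) := by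
  constructor
  · rintro ⟨i, (rfl | rfl), p, hp, hmu⟩ <;> exact ⟨p, hp, hmu⟩
  · rintro ⟨p, hp, hmu⟩
    cases q with
    | inl i => exact ⟨i, Or.inl rfl, p, hp, hmu⟩
    | inr i => exact ⟨i, Or.inr rfl, p, hp, hmu⟩

lemma chain_to_path (B : QMBasis A I) (Xs : List (Tup I n)) :
    ∀ (s : Set (I ⊕ I)) (q : I ⊕ I), q ∈ B.chain s Xs →
      (Xs = [] ∧ q ∈ s) ∨ ∃ p ∈ s, Relation.TransGen B.RelStep p q := by
  induction Xs with
  | nil => intro s q hq; exact Or.inl ⟨rfl, hq⟩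
  | cons X r ih =>
    intro s q hq
    rcases ih (B.phi s X) q hq with ⟨_, hq'⟩ | ⟨p', hp', hpath⟩
    · rw [mem_phi_iff] at hq'
      obtain ⟨p, hp, hmu⟩ := hq'
      exact Or.inr ⟨p, hp, Relation.TransGen.single ⟨X, hmu⟩⟩
    · rw [mem_phi_iff] at hp'
      obtain ⟨p, hp, hmu⟩ := hp'
      exact Or.inr ⟨p, hp, Relation.TransGen.head ⟨X, hmu⟩ hpath⟩

lemma chain_append (B : QMBasis A I) :
    ∀ (l : List (Tup I n)) (s : Set (I ⊕ I)) (X : Tup I n),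
      B.chain s (l ++ [X]) = B.phi (B.chain s l) X
  | [], _, _ => rfl
  | Y :: r, s, X => chain_append B r (B.phi s Y) X

lemma path_to_chain (B : QMBasis A I) {p q : I ⊕ I}
    (h : Relation.TransGen B.RelStep p q) :
    ∃ Xs : List (Tup I n), Xs ≠ [] ∧
      (∀ m, m < Xs.length → (B.chain {p} (Xs.take m)).Nonempty) ∧
      ∀ q', Sum.elim id id q' = Sum.elim id id q → q' ∈ B.chain {p} Xs := by
  induction h with
  | single hstep =>
    obtain ⟨X, hmu⟩ := hstep
    refine ⟨[X], by simp, ?_, ?_⟩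
    · intro m hm
      obtain rfl : m = 0 := by simpa using hm
      exact ⟨p, rfl⟩
    · intro q' hq'
      show q' ∈ B.phi {p} X
      rw [mem_phi_iff]
      exact ⟨p, rfl, by rw [hq']; exact hmu⟩
  | tail hpath hstep ih =>
    obtain ⟨Xs, hXne, hnonempty, hmem⟩ := ih
    obtain ⟨X, hmu⟩ := hstep
    refine ⟨Xs ++ [X], by simp, ?_, ?_⟩
    · intro m hm
      rw [List.length_append, List.length_singleton] at hm
      rcases lt_or_eq_of_le (Nat.lt_succ_iff.mp hm) with h' | h'
      · rw [List.take_append_of_le_length (le_of_lt h')]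
        exact hnonempty m h'
      · rw [h', List.take_left]
        exact ⟨_, hmem _ rfl⟩
    · intro q' hq'
      rw [chain_append, mem_phi_iff]
      exact ⟨_, hmem _ rfl, by rw [hq']; exact hmu⟩

lemma connected_of_path (B : QMBasis A I) {i j : I} (p : I ⊕ I)
    (hp : Sum.elim id id p = i)
    (h : Relation.TransGen B.RelStep p (Sum.inl j)) : B.Connected i j := by
  obtain ⟨Xs, hXne, hnonempty, hmem⟩ := B.path_to_chain h
  refine Or.inr ⟨Xs, p, hXne, ?_, hnonempty, hmem (Sum.inl j) rfl⟩
  cases p with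
  | inl a => exact Or.inl (by rw [← hp]; rfl)
  | inr a => exact Or.inr (by rw [← hp]; rfl)

lemma connected_to_path (B : QMBasis A I) {i j : I} (h : B.Connected i j) :
    i = j ∨ ∃ p, Sum.elim id id p = i ∧ Relation.TransGen B.RelStep p (Sum.inl j) := by
  rcases h with rfl | ⟨Xs, st, hXne, hst, _, hmem⟩
  · exact Or.inl rfl
  rcases B.chain_to_path Xs {st} _ hmem with ⟨hXs, _⟩ | ⟨p, hp, hpath⟩
  · exact absurd hXs hXne
  · right
    have hpst : p = st := hp
    subst hpst
    refine ⟨p, ?_, hpath⟩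
    rcases hst with rfl | rfl <;> rfl

lemma relStep_congr {B : QMBasis A I} {a b b' : I ⊕ I} (h : B.RelStep a b)
    (hb : Sum.elim id id b' = Sum.elim id id b) : B.RelStep a b' := by
  obtain ⟨X, hmu⟩ := h
  exact ⟨X, by rw [hb]; exact hmu⟩

lemma path_congr {B : QMBasis A I} {a b b' : I ⊕ I}
    (h : Relation.TransGen B.RelStep a b)
    (hb : Sum.elim id id b' = Sum.elim id id b) :
    Relation.TransGen B.RelStep a b' := by
  cases h with
  | single h1 => exact Relation.TransGen.single (relStep_congr h1 hb)
  | tail h1 h2 => exact Relation.TransGen.tail h1 (relStep_congr h2 hb)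

lemma aMem_perm {B : QMBasis A I} {σ : Equiv.Perm (Fin (n + 2))}
    {cT : Fin (n + 2) → Option I} {x : Option I}
    (h : B.aMem σ cT x) (e : Equiv.Perm (Fin (n + 2))) :
    B.aMem (σ.trans e.symm) (cT ∘ e) x := by
  obtain ⟨⟨z, hz, hz0⟩, hall, hnone⟩ := h
  refine ⟨⟨z, fun t => by simpa using hz t, hz0⟩,
      fun z' hz' => hall z' fun t => by simpa using hz' t, ?_⟩
  intro hx
  rcases hnone hx with h1 | h1
  · exact Or.inl fun t => h1 (e t)
  · exact Or.inr fun t => h1 (e t)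

lemma cons_cons_swap {α : Type*} (u w : α) (r : Fin n → α) :
    (Fin.cons u (Fin.cons w r) : Fin (n + 2) → α) ∘ (Equiv.swap 0 1) =
      Fin.cons w (Fin.cons u r) := by
  funext t
  refine Fin.cases ?_ (fun s => ?_) t
  · show (Fin.cons u (Fin.cons w r) : Fin (n + 2) → α) (Equiv.swap 0 1 0) = w
    rw [Equiv.swap_apply_left, ← Fin.succ_zero_eq_one, Fin.cons_succ, Fin.cons_zero]
  · refine Fin.cases ?_ (fun s' => ?_) s
    · show (Fin.cons u (Fin.cons w r) : Fin (n + 2) → α) (Equiv.swap 0 1 1) = u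
      rw [Equiv.swap_apply_right, Fin.cons_zero]
    · have h0 : (s'.succ.succ : Fin (n + 2)) ≠ 0 := Fin.succ_ne_zero _
      have h1 : (s'.succ.succ : Fin (n + 2)) ≠ 1 := by
        intro hcon
        rw [← Fin.succ_zero_eq_one] at hcon
        exact Fin.succ_ne_zero s' (Fin.succ_injective _ hcon)
      show (Fin.cons u (Fin.cons w r) : Fin (n + 2) → α) (Equiv.swap 0 1 s'.succ.succ) = _
      rw [Equiv.swap_apply_of_ne_of_ne h0 h1, Fin.cons_succ, Fin.cons_succ,
        Fin.cons_succ, Fin.cons_succ]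

lemma step_rev {B : QMBasis A I} {a b : I ⊕ I} (h : B.RelStep a b) :
    ∃ c, Sum.elim id id c = Sum.elim id id b ∧
      ∀ d, Sum.elim id id d = Sum.elim id id a → B.RelStep c d := by
  obtain ⟨⟨bb, cc⟩, hmu⟩ := h
  cases a with
  | inl j =>
    cases bb with
    | false =>
      obtain ⟨σ, ha⟩ := hmu
      refine ⟨Sum.inl (Sum.elim id id b), rfl, fun d hd => ⟨(true, cc), σ, ?_⟩⟩
      show B.aMem σ (Fin.cons (some (Sum.elim id id d)) cc) (some (Sum.elim id id b))
      rw [hd]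
      exact ha
    | true =>
      obtain ⟨σ, ha⟩ := hmu
      refine ⟨Sum.inl (Sum.elim id id b), rfl, fun d hd => ⟨(false, cc), σ, ?_⟩⟩
      show B.aMem σ (Fin.cons (some (Sum.elim id id b)) cc) (some (Sum.elim id id d))
      rw [hd]
      exact ha
  | inr j =>
    cases bb with
    | false =>
      obtain ⟨k, σ, ha⟩ := hmu
      refine ⟨Sum.inr (Sum.elim id id b), rfl, fun d hd => ⟨(false, cc), k,
        σ.trans (Equiv.swap 0 1).symm, ?_⟩⟩
      show B.aMem (σ.trans (Equiv.swap 0 1).symm)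
        (Fin.cons (some (Sum.elim id id d)) (Fin.cons (some (Sum.elim id id b))
          (fun t => cc (k.succAbove t)))) (cc k)
      rw [hd]
      have := aMem_perm ha (Equiv.swap 0 1)
      rwa [cons_cons_swap] at this
    | true => exact hmu.elim

lemma path_rev {B : QMBasis A I} {a b : I ⊕ I}
    (h : Relation.TransGen B.RelStep a b) :
    ∃ c, Sum.elim id id c = Sum.elim id id b ∧
      ∀ d, Sum.elim id id d = Sum.elim id id a → Relation.TransGen B.RelStep c d := by
  induction h using Relation.TransGen.head_induction_on with
  | single hstep =>
    obtain ⟨c, hc, hstep'⟩ := step_rev hstep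
    exact ⟨c, hc, fun d hd => Relation.TransGen.single (hstep' d hd)⟩
  | head hstep _ ihp =>
    obtain ⟨c₁, hc₁, hstep'⟩ := step_rev hstep
    obtain ⟨c₀, hc₀, hpath'⟩ := ihp
    exact ⟨c₀, hc₀, fun d hd =>
      Relation.TransGen.tail (hpath' c₁ hc₁) (hstep' d hd)⟩

lemma connected_trans (B : QMBasis A I) {i j k : I}
    (hij : B.Connected i j) (hjk : B.Connected j k) : B.Connected i k := by
  rcases B.connected_to_path hij with rfl | ⟨p, hp, hpath⟩
  · exact hjk
  rcases B.connected_to_path hjk with rfl | ⟨p', hp', hpath'⟩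
  · exact B.connected_of_path p hp hpath
  · exact B.connected_of_path p hp
      ((path_congr hpath (show Sum.elim id id p' = Sum.elim id id (Sum.inl j) from hp')).trans hpath')

lemma connected_symm (B : QMBasis A I) {i j : I} (h : B.Connected i j) :
    B.Connected j i := by
  rcases B.connected_to_path h with rfl | ⟨p, hp, hpath⟩
  · exact Or.inl rfl
  obtain ⟨c, hc, hrev⟩ := path_rev hpath
  exact B.connected_of_path c hc (hrev (Sum.inl i) hp.symm)

end QMBasis

theorem stmt17 {F : Type} [Field F] {G : Type} [AddCommGroup G] [DecidableEq G]
    {L : Type} [AddCommGroup L] [Module F L] {n : ℕ} {I : Type}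
    {A : ColorGLT F G L n} (B : QMBasis A I) (i h : I) (hne : B.cls i ≠ B.cls h)
    (i' h' : I) (hi' : i' ∈ B.cls i) (hh' : h' ∈ B.cls h)
    (c : Fin (n + 2) → I) (σ : Equiv.Perm (Fin (n + 2)))
    (hc0 : c 0 = i') (hc1 : c 1 = h') :
    ¬(A.bracket (fun t => B.e (c (σ t))) ≠ 0 ∧
        A.bracket (fun t => B.e (c (σ t))) ∈ B.V) ∧
      A.bracket (fun t => B.e (c (σ t))) = 0 := by
  have hz : A.bracket (fun t => B.e (c (σ t))) = 0 := by
    by_contra hz0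
    obtain ⟨x₀, hx₀⟩ : ∃ x₀ : Option I, ∀ z : Fin (n + 2) → L,
        (∀ t, z t ∈ B.elemSet (some (c (σ t)))) → A.bracket z ∈ B.targetSet x₀ := by
      rcases B.qm1 (fun t => c (σ t)) with ⟨j, hj⟩ | hV
      · refine ⟨some j, fun z hzmem => ?_⟩
        have hzz : z = fun t => B.e (c (σ t)) := funext fun t => hzmem t
        rw [hzz]; exact hj
      · refine ⟨none, fun z hzmem => ?_⟩
        have hzz : z = fun t => B.e (c (σ t)) := funext fun t => hzmem t
        rw [hzz]; exact hV
    have haMem : B.aMem σ (fun t => some (c t)) x₀ :=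
      ⟨⟨fun t => B.e (c (σ t)), fun t => rfl, hz0⟩, hx₀, fun _ => Or.inl fun t => rfl⟩
    have htup : (Fin.cons (some i') (Fin.cons (some h')
        (fun t : Fin n => (Fin.snoc (fun s : Fin n => some (c s.succ.succ)) x₀ :
          Fin (n + 1) → Option I) ((Fin.last n).succAbove t))) : Fin (n + 2) → Option I)
        = fun t => some (c t) := by
      funext t
      refine Fin.cases ?_ (fun s => ?_) t
      · rw [Fin.cons_zero, hc0]
      · rw [Fin.cons_succ]
        refine Fin.cases ?_ (fun w => ?_) s
        · show some h' = some (c ((0 : Fin (n + 1)).succ))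
          rw [hc1.symm, Fin.succ_zero_eq_one]
        · rw [Fin.cons_succ, Fin.succAbove_last, Fin.snoc_castSucc]
    have hstep : B.RelStep (Sum.inr h') (Sum.inl i') := by
      refine ⟨(false, Fin.snoc (fun s : Fin n => some (c s.succ.succ)) x₀),
        Fin.last n, σ, ?_⟩
      show B.aMem σ (Fin.cons (some i') (Fin.cons (some h')
        (fun t : Fin n => (Fin.snoc (fun s : Fin n => some (c s.succ.succ)) x₀ :
          Fin (n + 1) → Option I) ((Fin.last n).succAbove t))))
        ((Fin.snoc (fun s : Fin n => some (c s.succ.succ)) x₀ :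
          Fin (n + 1) → Option I) (Fin.last n))
      rw [htup, Fin.snoc_last]
      exact haMem
    have hconn : B.Connected h' i' :=
      B.connected_of_path (Sum.inr h') rfl (Relation.TransGen.single hstep)
    have h1 : B.Connected h i' := B.connected_trans hh' hconn
    have h2 : B.Connected h i := B.connected_trans h1 (B.connected_symm hi')
    apply hne
    ext j
    exact ⟨fun hj => B.connected_trans h2 hj,
      fun hj => B.connected_trans (B.connected_symm h2) hj⟩
  exact ⟨fun hcon => hcon.1 hz, hz⟩
end

section
/- Let L = V ⊕ W be a color gLt-algebra admitting a μ-quasi-multiplicative basis {e_i}_{i∈I} of W ≠ 0, and let 𝔍 be a nonzero color gLt-ideal of L admitting a basis inherited from {e_i}. If e_{i₀} ∈ 𝔍 for some i₀ ∈ I and i ∈ I is connected to i₀, then e_i ∈ 𝔍. Consequently, if all elements of I are connected and some e_{i₀} ∈ 𝔍, then W ⊆ 𝔍. -/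
set_option maxHeartbeats 1000000

theorem stmt18 {F : Type} [Field F] {G : Type} [AddCommGroup G] [DecidableEq G]
    {L : Type} [AddCommGroup L] [Module F L] {n : ℕ} {I : Type}
    {A : ColorGLT F G L n} (B : QMBasis A I) (hmu : B.MuQM) (S : Submodule F L)
    (hS : A.IsIdeal S) (hne : S ≠ ⊥) (hinh : B.HasInheritedBasis S) :
    (∀ i₀ i : I, B.e i₀ ∈ S → B.Connected i₀ i → B.e i ∈ S) ∧
    ((∀ i j : I, B.Connected i j) → (∃ i₀ : I, B.e i₀ ∈ S) → B.W ≤ S) := by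
  have key : ∀ (Xs : List (QMBasis.Tup I n)) (s : Set (I ⊕ I)),
      (∀ p ∈ s, B.e (Sum.elim id id p) ∈ S) →
      ∀ p ∈ B.chain s Xs, B.e (Sum.elim id id p) ∈ S := by
    intro Xs
    induction Xs with
    | nil => intro s hs p hp; exact hs p hp
    | cons X r ih =>
      intro s hs p hp
      refine ih _ ?_ p hp
      intro q hq
      obtain ⟨i, hqi, j, hj, hmem⟩ := hq
      obtain ⟨σ, z, hz, hei⟩ := hmu _ X i hmem
      have hz0 : z (σ⁻¹ 0) = B.e (Sum.elim id id j) := by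
        have h := hz (σ⁻¹ 0)
        rw [show σ (σ⁻¹ 0) = 0 from by simp] at h
        cases j with
        | inl j' => simpa [QMBasis.fullTup, QMBasis.uSet] using h
        | inr j' => simpa [QMBasis.fullTup, QMBasis.uSet] using h
      have hbr : A.bracket z ∈ S := by
        have h := hS.2 σ (fun t => z (σ⁻¹ t)) (show z (σ⁻¹ 0) ∈ S from hz0 ▸ hs j hj)
        have hzz : (fun t => z (σ⁻¹ (σ t))) = z := by
          funext t; simp
        rwa [hzz] at h
      have hle : Submodule.span F {A.bracket z} ≤ S := by
        rw [Submodule.span_singleton_le_iff_mem]; exact hbr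
      have hei' := hle hei
      rcases hqi with h | h <;> subst h <;> simpa using hei'
  have part1 : ∀ i₀ i : I, B.e i₀ ∈ S → B.Connected i₀ i → B.e i ∈ S := by
    intro i₀ i h0 hconn
    rcases hconn with rfl | ⟨Xs, st, _, hst, _, hmem⟩
    · exact h0
    · have h := key Xs {st} ?_ (Sum.inl i) hmem
      · simpa using h
      · intro p hp
        rcases hp with rfl
        rcases hst with rfl | rfl <;> simpa using h0
  refine ⟨part1, ?_⟩
  rintro hall ⟨i₀, h0⟩
  rw [← B.e_span, Submodule.span_le]
  rintro x ⟨i, rfl⟩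
  exact part1 i₀ i h0 (hall i₀ i)
end
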